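/- Reach-set characterization of guaranteed satisfaction: with the hypotheses that t bounds the duration of all words in Cons_𝒜(o), the inclusion Cons_𝒜(o) ·_t TΣ^ω ∩ L(𝒜) ⊆ L(φ) holds if and only if Reach_{ℬ_{¬φ} ⊗ 𝒜}(Cons_𝒜(o), t) ∩ NonEmpty(ℬ_{¬φ} ⊗ 𝒜) = ∅, where ℬ_{¬φ} is a TBA with L(ℬ_{¬φ}) = TΣ^ω \ L(φ). -/

import Mathlib

open Classical

/-- A finite timed word: a finite sequence of letters with non-decreasing,
non-negative timestamps. -/
structure FTW (Sigma : Type) where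
  toList : List (Sigma × ℝ)
  nonneg : ∀ p ∈ toList, 0 ≤ p.2
  mono : (toList.map Prod.snd).Chain' (· ≤ ·)

/-- τ(ρ): the last timestamp of a finite timed word (0 for the empty word). -/
def FTW.dur {Sigma : Type} (ρ : FTW Sigma) : ℝ := (ρ.toList.map Prod.snd).getLastD 0

/-- An infinite timed word: letters with non-decreasing, non-negative,
divergent timestamps.  The set of all such words is TΣ^ω, here `Set.univ`. -/
structure ITW (Sigma : Type) where
  σ : ℕ → Sigma
  τ : ℕ → ℝ
  nonneg : ∀ i, 0 ≤ τ i
  mono : Monotone τ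
  div : Filter.Tendsto τ Filter.atTop Filter.atTop

/-- ρ is the concatenation ρ₁ ·_t ρ₂ of a finite and an infinite timed word:
the timestamps of ρ₂ are shifted by t. -/
def IsConcat {Sigma : Type} (ρ₁ : FTW Sigma) (t : ℝ) (ρ₂ : ITW Sigma) (ρ : ITW Sigma) : Prop :=
  ρ₁.dur ≤ t ∧
  (∀ i : Fin ρ₁.toList.length, ρ.σ i = (ρ₁.toList.get i).1 ∧ ρ.τ i = (ρ₁.toList.get i).2) ∧
  (∀ i, ρ₁.toList.length ≤ i →
    ρ.σ i = ρ₂.σ (i - ρ₁.toList.length) ∧ ρ.τ i = ρ₂.τ (i - ρ₁.toList.length) + t)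

/-- L₁ ·_t L₂, elementwise concatenation at time t. -/
def concatSet {Sigma : Type} (L₁ : Set (FTW Sigma)) (t : ℝ) (L₂ : Set (ITW Sigma)) :
    Set (ITW Sigma) :=
  {ρ | ∃ ρ₁ ∈ L₁, ∃ ρ₂ ∈ L₂, IsConcat ρ₁ t ρ₂ ρ}

/-- ρ is the concatenation ρ₁ ·_t ρ₂ of two finite timed words. -/
def IsConcatF {Sigma : Type} (ρ₁ : FTW Sigma) (t : ℝ) (ρ₂ ρ : FTW Sigma) : Prop :=
  ρ₁.dur ≤ t ∧ ρ.toList = ρ₁.toList ++ ρ₂.toList.map (fun p => (p.1, p.2 + t))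

/-- O ⊑_t O': the observation O' extends the observation O at time t. -/
def Extends {Sigma : Type} (O : Set (FTW Sigma)) (t : ℝ) (O' : Set (FTW Sigma)) : Prop :=
  (∀ o ∈ O, ∃ ostar ρ', ρ' ∈ O' ∧ IsConcatF o t ostar ρ') ∧
  (∀ o' ∈ O', ∃ o ∈ O, ∃ ostar, IsConcatF o t ostar o')

/-- A timed Büchi automaton with locations Q, alphabet Sigma, clocks C.
Guards are modelled as predicates on clock valuations. -/
structure TBA (Sigma Q C : Type) where
  init : Set Q
  trans : Set (Q × Q × Sigma × Set C × ((C → ℝ) → Prop))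
  acc : Set Q

/-- One transition step of the TBA: from state s, reading letter a after d time
units have elapsed since the previous event, reaching state s'. -/
def Step {Sigma Q C : Type} (M : TBA Sigma Q C) (s : Q × (C → ℝ)) (a : Sigma) (d : ℝ)
    (s' : Q × (C → ℝ)) : Prop :=
  ∃ lam g, (s.1, s'.1, a, lam, g) ∈ M.trans ∧ g (fun c => s.2 c + d) ∧
    s'.2 = fun c => if c ∈ lam then 0 else s.2 c + d

/-- The timestamp of the previous event (0 before the first event, τ₀ = 0). -/
def prevT {Sigma : Type} (ρ : ITW Sigma) (i : ℕ) : ℝ := if i = 0 then 0 else ρ.τ (i - 1)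

/-- r is an accepting run of M from state s over the infinite timed word ρ:
it starts in s, every step is a valid transition, and accepting locations are
visited infinitely often. -/
def AccRunFrom {Sigma Q C : Type} (M : TBA Sigma Q C) (s : Q × (C → ℝ)) (ρ : ITW Sigma)
    (r : ℕ → Q × (C → ℝ)) : Prop :=
  r 0 = s ∧ (∀ i, Step M (r i) (ρ.σ i) (ρ.τ i - prevT ρ i) (r (i + 1))) ∧
  (∀ N, ∃ i, N < i ∧ (r i).1 ∈ M.acc)

/-- L(M, s): the language of M from state s. -/
def LangFrom {Sigma Q C : Type} (M : TBA Sigma Q C) (s : Q × (C → ℝ)) : Set (ITW Sigma) :=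
  {ρ | ∃ r, AccRunFrom M s ρ r}

/-- L(M): the language of M from its initial states with all clocks zero. -/
def Lang {Sigma Q C : Type} (M : TBA Sigma Q C) : Set (ITW Sigma) :=
  {ρ | ∃ q ∈ M.init, ρ ∈ LangFrom M (q, fun _ => 0)}

/-- NonEmpty(M): the states of M with nonempty language. -/
def NonEmptyStates {Sigma Q C : Type} (M : TBA Sigma Q C) : Set (Q × (C → ℝ)) :=
  {s | (LangFrom M s).Nonempty}

/-- The timestamp of the previous event of a finite timed word (list form). -/
def listPrevT {Sigma : Type} (l : List (Sigma × ℝ)) (i : ℕ) : ℝ :=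
  if i = 0 then 0 else (l.map Prod.snd).getD (i - 1) 0

/-- r is a run prefix of M from an initial state processing the finite timed word l:
r i is the state after the first i events. -/
def FinRunFrom {Sigma Q C : Type} (M : TBA Sigma Q C) (r : ℕ → Q × (C → ℝ))
    (l : List (Sigma × ℝ)) : Prop :=
  (∃ q0 ∈ M.init, r 0 = (q0, fun _ => 0)) ∧
  ∀ i : Fin l.length, Step M (r i.1) (l.get i).1 ((l.get i).2 - listPrevT l i.1) (r (i.1 + 1))

/-- Reach_M(L, t): the states reachable by processing some word of L, with clocks
advanced to the current time t (empty contribution when duration exceeds t). -/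
def Reach {Sigma Q C : Type} (M : TBA Sigma Q C) (L : Set (FTW Sigma)) (t : ℝ) :
    Set (Q × (C → ℝ)) :=
  {s | ∃ ρ ∈ L, ρ.dur ≤ t ∧ ∃ r, FinRunFrom M r ρ.toList ∧
    s = ((r ρ.toList.length).1, fun c => (r ρ.toList.length).2 c + (t - ρ.dur))}

section Aux

variable {Sigma : Type}

lemma FTW.dur_eq_get (o : FTW Sigma) (h : 0 < o.toList.length) :
    o.dur = (o.toList.get ⟨o.toList.length - 1, by omega⟩).2 := by
  have hne : o.toList ≠ [] := by
    intro hnil; rw [hnil] at h; simp at h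
  have hne' : o.toList.map Prod.snd ≠ [] := by simp [hne]
  rw [FTW.dur, List.getLastD_eq_getLast?, List.getLast?_eq_getLast hne', Option.getD_some,
    List.getLast_eq_getElem]
  simp

lemma FTW.get_le_dur (o : FTW Sigma) (i : Fin o.toList.length) :
    (o.toList.get i).2 ≤ o.dur := by
  have hlen : 0 < o.toList.length := lt_of_le_of_lt (Nat.zero_le _) i.2
  rw [o.dur_eq_get hlen]
  by_cases h : i.1 = o.toList.length - 1
  · have : i = ⟨o.toList.length - 1, by omega⟩ := Fin.ext h
    rw [this]
  · have hp := List.pairwise_iff_get.mp (List.isChain_iff_pairwise.mp o.mono)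
    have hi : i.1 < (o.toList.map Prod.snd).length := by simpa using i.2
    have := hp ⟨i.1, hi⟩ ⟨o.toList.length - 1, by simp; omega⟩
      (by simp only [Fin.mk_lt_mk]; omega)
    simpa using this

lemma FTW.dur_nonneg (o : FTW Sigma) : 0 ≤ o.dur := by
  rcases Nat.eq_zero_or_pos o.toList.length with h | h
  · have : o.toList = [] := List.length_eq_zero_iff.mp h
    simp [FTW.dur, this]
  · rw [o.dur_eq_get h]
    exact o.nonneg _ (o.toList.get_mem _)

lemma step_shift {Q C : Type} (M : TBA Sigma Q C) (q : Q) (v : C → ℝ) (κ d : ℝ)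
    (a : Sigma) (s' : Q × (C → ℝ)) :
    Step M (q, fun c => v c + κ) a d s' ↔ Step M (q, v) a (d + κ) s' := by
  have e2 : (fun c => (fun c => v c + κ) c + d) = (fun c => v c + (d + κ)) := by
    funext c; simp; ring
  have e1 : ∀ lam : Set C, (fun c => if c ∈ lam then 0 else (fun c => v c + κ) c + d)
      = (fun c => if c ∈ lam then (0:ℝ) else v c + (d + κ)) := by
    intro lam; funext c; by_cases hc : c ∈ lam <;> simp [hc] <;> ring
  constructor
  · rintro ⟨lam, g, h1, h2, h3⟩
    exact ⟨lam, g, h1, by rw [← e2]; exact h2, by rw [h3, e1 lam]⟩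
  · rintro ⟨lam, g, h1, h2, h3⟩
    exact ⟨lam, g, h1, by show g _; rw [e2]; exact h2, by rw [h3, ← e1 lam]⟩

lemma exists_concat (o : FTW Sigma) (t : ℝ) (ρ₂ : ITW Sigma) (ht : o.dur ≤ t) :
    ∃ ρ : ITW Sigma, IsConcat o t ρ₂ ρ := by
  have ht0 : 0 ≤ t := le_trans o.dur_nonneg ht
  refine ⟨⟨fun i => if h : i < o.toList.length then (o.toList.get ⟨i, h⟩).1
            else ρ₂.σ (i - o.toList.length),
          fun i => if h : i < o.toList.length then (o.toList.get ⟨i, h⟩).2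
            else ρ₂.τ (i - o.toList.length) + t,
          ?_, ?_, ?_⟩, ht, fun i => ⟨by simp [i.2], by simp [i.2]⟩,
          fun i hi => ⟨by simp [show ¬ i < o.toList.length by omega],
            by simp [show ¬ i < o.toList.length by omega]⟩⟩
  · intro i
    by_cases h : i < o.toList.length
    · simp only [dif_pos h]
      exact o.nonneg _ (o.toList.get_mem _)
    · simp only [dif_neg h]
      exact add_nonneg (ρ₂.nonneg _) ht0
  · apply monotone_nat_of_le_succ
    intro i
    by_cases h1 : i + 1 < o.toList.length
    · have h0 : i < o.toList.length := by omega
      simp only [dif_pos h1, dif_pos h0]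
      have := List.isChain_iff_getElem.mp o.mono i (by simp; omega)
      simpa using this
    · by_cases h0 : i < o.toList.length
      · simp only [dif_pos h0, dif_neg h1]
        exact le_trans (o.get_le_dur ⟨i, h0⟩)
          (le_trans ht (le_add_of_nonneg_left (ρ₂.nonneg _)))
      · simp only [dif_neg h0, dif_neg h1]
        exact add_le_add_left (ρ₂.mono (by omega)) t
  · have h1 : Filter.Tendsto (fun i : ℕ => ρ₂.τ (i - o.toList.length) + t)
        Filter.atTop Filter.atTop :=
      Filter.tendsto_atTop_add_const_right _ t
        (ρ₂.div.comp (Filter.tendsto_sub_atTop_nat o.toList.length))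
    refine h1.congr' ?_
    filter_upwards [Filter.eventually_ge_atTop o.toList.length] with i hi
    simp [show ¬ i < o.toList.length by omega]

lemma lang_of_concat {Q C : Type} (M : TBA Sigma Q C) (o : FTW Sigma) (t : ℝ)
    (ρ₂ ρ : ITW Sigma) (hc : IsConcat o t ρ₂ ρ) (r : ℕ → Q × (C → ℝ))
    (hr : FinRunFrom M r o.toList)
    (h2 : ρ₂ ∈ LangFrom M ((r o.toList.length).1,
      fun c => (r o.toList.length).2 c + (t - o.dur))) :
    ρ ∈ Lang M := by
  obtain ⟨hd, hpre, htail⟩ := hc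
  obtain ⟨r₂, hr20, hstep2, hacc2⟩ := h2
  obtain ⟨⟨q0, hq0, hr00⟩, hstep1⟩ := hr
  set n := o.toList.length with hn
  -- the previous timestamp at index n is the duration of o
  have hdn : prevT ρ n = o.dur := by
    rcases Nat.eq_zero_or_pos n with h | h
    · have hnil : o.toList = [] := List.length_eq_zero_iff.mp (by omega)
      simp [prevT, h, FTW.dur, hnil]
    · have h1 : prevT ρ n = ρ.τ (n - 1) := by simp [prevT]; omega
      rw [h1, (hpre ⟨n - 1, by omega⟩).2, o.dur_eq_get h]
  refine ⟨q0, hq0, fun i => if i ≤ n then r i else r₂ (i - n), ?_, ?_, ?_⟩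
  · simp [hr00]
  · intro i
    by_cases hi : i < n
    · simp only [if_pos (by omega : i ≤ n), if_pos (by omega : i + 1 ≤ n)]
      have hs := hstep1 ⟨i, hi⟩
      have hσ : ρ.σ i = (o.toList.get ⟨i, hi⟩).1 := (hpre ⟨i, hi⟩).1
      have hτ : ρ.τ i = (o.toList.get ⟨i, hi⟩).2 := (hpre ⟨i, hi⟩).2
      have hprev : prevT ρ i = listPrevT o.toList i := by
        by_cases h0 : i = 0
        · simp [prevT, listPrevT, h0]
        · have h1 : i - 1 < n := by omega
          have : listPrevT o.toList i = (o.toList.get ⟨i - 1, h1⟩).2 := by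
            simp only [listPrevT, if_neg h0]
            rw [List.getD_eq_getElem _ _ (by simpa using h1)]
            simp
          rw [this, ← (hpre ⟨i - 1, h1⟩).2]
          simp [prevT, h0]
      rw [hσ, hτ, hprev]
      exact hs
    · by_cases hie : i = n
      · subst hie
        simp only [if_pos (le_refl n), if_neg (by omega : ¬ n + 1 ≤ n),
          Nat.add_sub_cancel_left]
        have hσ : ρ.σ n = ρ₂.σ 0 := by simpa using (htail n le_rfl).1
        have hτ : ρ.τ n = ρ₂.τ 0 + t := by simpa using (htail n le_rfl).2
        rw [hσ, hτ, hdn]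
        have hs := hstep2 0
        rw [hr20] at hs
        have := (step_shift M (r n).1 (r n).2 (t - o.dur) (ρ₂.τ 0 - prevT ρ₂ 0)
          (ρ₂.σ 0) (r₂ 1)).mp hs
        have he : ρ₂.τ 0 - prevT ρ₂ 0 + (t - o.dur) = ρ₂.τ 0 + t - o.dur := by
          simp [prevT]; ring
        rwa [he, Prod.mk.eta] at this
      · have hni : n < i := by omega
        simp only [if_neg (by omega : ¬ i ≤ n), if_neg (by omega : ¬ i + 1 ≤ n)]
        have hσ : ρ.σ i = ρ₂.σ (i - n) := (htail i (by omega)).1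
        have hτ : ρ.τ i = ρ₂.τ (i - n) + t := (htail i (by omega)).2
        have hprev : prevT ρ i = ρ₂.τ (i - n - 1) + t := by
          have h1 : prevT ρ i = ρ.τ (i - 1) := by simp [prevT]; omega
          rw [h1, (htail (i - 1) (by omega)).2]
          congr 2
          omega
        have hprev2 : prevT ρ₂ (i - n) = ρ₂.τ (i - n - 1) := by
          simp [prevT]; omega
        have hs := hstep2 (i - n)
        rw [hprev2] at hs
        have he : ρ.τ i - prevT ρ i = ρ₂.τ (i - n) - ρ₂.τ (i - n - 1) := by
          rw [hτ, hprev]; ring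
        rw [hσ, he, show i + 1 - n = (i - n) + 1 by omega]
        exact hs
  · intro N
    obtain ⟨j, hj, hjacc⟩ := hacc2 N
    refine ⟨j + n, by omega, ?_⟩
    have hne : ¬ (j + n ≤ n) := by omega
    simp only [if_neg hne, Nat.add_sub_cancel]
    exact hjacc

lemma split_concat {Q C : Type} (M : TBA Sigma Q C) (o : FTW Sigma) (t : ℝ)
    (ρ₂ ρ : ITW Sigma) (hc : IsConcat o t ρ₂ ρ) (q0 : Q) (r : ℕ → Q × (C → ℝ))
    (hr : AccRunFrom M (q0, fun _ => 0) ρ r) (hq0 : q0 ∈ M.init) :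
    FinRunFrom M r o.toList ∧
    (LangFrom M ((r o.toList.length).1,
      fun c => (r o.toList.length).2 c + (t - o.dur))).Nonempty := by
  obtain ⟨hd, hpre, htail⟩ := hc
  obtain ⟨hr0, hstep, hacc⟩ := hr
  set n := o.toList.length with hn
  have hdn : prevT ρ n = o.dur := by
    rcases Nat.eq_zero_or_pos n with h | h
    · have hnil : o.toList = [] := List.length_eq_zero_iff.mp (by omega)
      simp [prevT, h, FTW.dur, hnil]
    · have h1 : prevT ρ n = ρ.τ (n - 1) := by simp [prevT]; omega
      rw [h1, (hpre ⟨n - 1, by omega⟩).2, o.dur_eq_get h]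
  constructor
  · refine ⟨⟨q0, hq0, hr0⟩, ?_⟩
    intro i
    have hs := hstep i.1
    have hσ : ρ.σ i.1 = (o.toList.get i).1 := (hpre i).1
    have hτ : ρ.τ i.1 = (o.toList.get i).2 := (hpre i).2
    have hprev : prevT ρ i.1 = listPrevT o.toList i.1 := by
      by_cases h0 : i.1 = 0
      · simp [prevT, listPrevT, h0]
      · have h1 : i.1 - 1 < n := by have := i.2; omega
        have : listPrevT o.toList i.1 = (o.toList.get ⟨i.1 - 1, h1⟩).2 := by
          simp only [listPrevT, if_neg h0]
          rw [List.getD_eq_getElem _ _ (by simpa using h1)]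
          simp
        rw [this, ← (hpre ⟨i.1 - 1, h1⟩).2]
        simp [prevT, h0]
    rw [← hσ, ← hτ, ← hprev]
    exact hs
  · -- the suffix word, shifted back to start at time t
    have hnn : ∀ i, 0 ≤ ρ.τ (i + n) - t := by
      intro i
      have h1 : ρ.τ (i + n) = ρ₂.τ (i + n - n) + t := (htail (i + n) (by omega)).2
      rw [h1, Nat.add_sub_cancel]
      simpa using ρ₂.nonneg i
    have hmon : Monotone (fun i => ρ.τ (i + n) - t) := by
      intro i j hij
      exact sub_le_sub_right (ρ.mono (by omega)) t
    have hdiv : Filter.Tendsto (fun i => ρ.τ (i + n) - t) Filter.atTop Filter.atTop := by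
      have h1 : Filter.Tendsto (fun i : ℕ => ρ.τ (i + n)) Filter.atTop Filter.atTop :=
        ρ.div.comp (Filter.tendsto_add_atTop_nat n)
      simpa [sub_eq_add_neg] using Filter.tendsto_atTop_add_const_right _ (-t) h1
    set ρ' : ITW Sigma := ⟨fun i => ρ.σ (i + n), fun i => ρ.τ (i + n) - t,
      hnn, hmon, hdiv⟩ with hρ'
    have hσ' : ∀ i, ρ'.σ i = ρ.σ (i + n) := fun i => rfl
    have hτ' : ∀ i, ρ'.τ i = ρ.τ (i + n) - t := fun i => rfl
    refine ⟨ρ', fun i => if i = 0 then ((r n).1, fun c => (r n).2 c + (t - o.dur))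
        else r (i + n), rfl, ?_, ?_⟩
    · intro i
      by_cases h0 : i = 0
      · subst h0
        simp only [if_pos rfl, if_neg (by omega : ¬ (0:ℕ) + 1 = 0)]
        have hs := hstep n
        rw [hdn] at hs
        refine (step_shift M (r n).1 (r n).2 (t - o.dur) (ρ'.τ 0 - prevT ρ' 0)
          (ρ'.σ 0) (r (0 + 1 + n))).mpr ?_
        have he : ρ'.τ 0 - prevT ρ' 0 + (t - o.dur) = ρ.τ n - o.dur := by
          simp only [prevT, hτ', Nat.zero_add]
          norm_num
        rw [he, Prod.mk.eta, hσ' 0, show (0:ℕ) + n = n from by omega,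
          show 0 + 1 + n = n + 1 from by omega]
        exact hs
      · simp only [if_neg h0, if_neg (by omega : ¬ i + 1 = 0)]
        have hs := hstep (i + n)
        have hprev : prevT ρ (i + n) = ρ.τ (i + n - 1) := by simp [prevT]; omega
        have hprev' : prevT ρ' i = ρ.τ (i - 1 + n) - t := by
          simp only [prevT, if_neg h0, hτ']
        have he : ρ'.τ i - prevT ρ' i = ρ.τ (i + n) - prevT ρ (i + n) := by
          rw [hprev', hτ' i, hprev, show i + n - 1 = i - 1 + n from by omega]; ring
        rw [he, hσ' i, show i + 1 + n = i + n + 1 from by omega]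
        exact hs
    · intro N
      obtain ⟨j, hj, hjacc⟩ := hacc (n + N)
      refine ⟨j - n, by omega, ?_⟩
      simp only [if_neg (by omega : ¬ j - n = 0), show j - n + n = j from by omega]
      exact hjacc

end Aux

/-- reach-set characterization of guaranteed satisfaction: with all
words of O of duration ≤ t, ℬ_{¬φ} a TBA for the complement of φ, and P a product
TBA with L(P) = L(ℬ_{¬φ}) ∩ L(𝒜), we have
O ·_t TΣ^ω ∩ L(𝒜) ⊆ φ iff Reach_P(O, t) ∩ NonEmpty(P) = ∅. -/
theorem stmt14 {Sigma Q C QB CB QP CP : Type} [Fintype Sigma]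
    (M : TBA Sigma Q C) (B : TBA Sigma QB CB) (P : TBA Sigma QP CP)
    (φ : Set (ITW Sigma)) (hB : Lang B = (Set.univ : Set (ITW Sigma)) \ φ)
    (hP : Lang P = Lang B ∩ Lang M)
    (O : Set (FTW Sigma)) (t : ℝ) (hdur : ∀ ρ ∈ O, FTW.dur ρ ≤ t) :
    concatSet O t Set.univ ∩ Lang M ⊆ φ ↔
    Reach P O t ∩ NonEmptyStates P = ∅ := by
  constructor
  · intro h
    rw [Set.eq_empty_iff_forall_notMem]
    rintro s ⟨⟨o, ho, hod, r, hrun, hs⟩, ⟨ρ₂, hρ₂⟩⟩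
    obtain ⟨ρ, hcc⟩ := exists_concat o t ρ₂ hod
    have hρP : ρ ∈ Lang P := lang_of_concat P o t ρ₂ ρ hcc r hrun (hs ▸ hρ₂)
    rw [hP] at hρP
    have hρB := hρP.1
    rw [hB] at hρB
    exact hρB.2 (h ⟨⟨o, ho, ρ₂, Set.mem_univ _, hcc⟩, hρP.2⟩)
  · rintro h ρ ⟨⟨o, ho, ρ₂, -, hcc⟩, hρM⟩
    by_contra hφ
    have hρB : ρ ∈ Lang B := by rw [hB]; exact ⟨Set.mem_univ _, hφ⟩
    have hρP : ρ ∈ Lang P := by rw [hP]; exact ⟨hρB, hρM⟩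
    obtain ⟨q0, hq0, rr, hrr⟩ := hρP
    obtain ⟨hfin, hne⟩ := split_concat P o t ρ₂ ρ hcc q0 rr hrr hq0
    have hmem : (((rr o.toList.length).1,
        fun c => (rr o.toList.length).2 c + (t - o.dur)))
        ∈ Reach P O t ∩ NonEmptyStates P :=
      ⟨⟨o, ho, hdur o ho, rr, hfin, rfl⟩, hne⟩
    rw [h] at hmem
    exact hmem
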